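/- arXiv:0909.3184 — 2 statements merged into one kernel-verified Lean document; each statement's English description precedes it below -/
import Mathlib

section
/- For a fixed nonnegative integer m and fixed real z > 0, as n → ∞ one has B_n^{-m}(z) = (n!/(n+m)!) · (z+m)^{n+m} · (1 + O(((z+m−1)/(z+m))^{n+m})); in particular B_n^{-m}(z) · (n+m)!/(n! · (z+m)^{n+m}) → 1. -/
open Finset Filter Asymptotics

/-- For fixed `m ≥ 0` and fixed real `z > 0`, as `n → ∞`,
`B_n^{-m}(z) = (n!/(n+m)!) (z+m)^{n+m} (1 + O(((z+m-1)/(z+m))^{n+m}))`;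
in particular `B_n^{-m}(z) (n+m)!/(n! (z+m)^{n+m}) → 1`. -/
theorem stmt2 (m : ℕ) (z : ℝ) (hz : 0 < z) (B : ℕ → ℝ)
    (hB : ∀ n : ℕ, B n = (Nat.factorial n : ℝ) / (Nat.factorial (n + m) : ℝ) *
      ∑ r ∈ range (m + 1), (-1) ^ (m - r) * (Nat.choose m r : ℝ) * (z + r) ^ (n + m)) :
    ((fun n : ℕ => B n * (Nat.factorial (n + m) : ℝ) /
        ((Nat.factorial n : ℝ) * (z + m) ^ (n + m)) - 1)
      =O[atTop] fun n : ℕ => ((z + m - 1) / (z + m)) ^ (n + m)) ∧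
    Tendsto (fun n : ℕ => B n * (Nat.factorial (n + m) : ℝ) /
        ((Nat.factorial n : ℝ) * (z + m) ^ (n + m)))
      atTop (nhds 1) := by
  have hzm : (0:ℝ) < z + m := by positivity
  have hf : ∀ n, B n * (Nat.factorial (n+m):ℝ) / ((Nat.factorial n : ℝ) * (z+m)^(n+m))
      = ∑ r ∈ range (m+1), (-1)^(m-r) * (Nat.choose m r : ℝ) * ((z+r)/(z+m))^(n+m) := by
    intro n
    have h1 : (Nat.factorial n : ℝ) ≠ 0 := Nat.cast_ne_zero.mpr (Nat.factorial_ne_zero n)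
    have h2 : (Nat.factorial (n+m) : ℝ) ≠ 0 := Nat.cast_ne_zero.mpr (Nat.factorial_ne_zero _)
    have h3 : (z+m)^(n+m) ≠ 0 := by positivity
    rw [hB]
    rw [show (∑ r ∈ range (m+1), (-1)^(m-r) * (Nat.choose m r : ℝ) * ((z+r)/(z+m))^(n+m))
      = (∑ r ∈ range (m+1), (-1)^(m-r) * (Nat.choose m r : ℝ) * (z+r)^(n+m)) / (z+m)^(n+m) by
      rw [Finset.sum_div]; exact Finset.sum_congr rfl fun r _ => by rw [div_pow]; ring]
    field_simp
  have hsplit : ∀ n, B n * (Nat.factorial (n+m):ℝ) / ((Nat.factorial n : ℝ) * (z+m)^(n+m)) - 1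
      = ∑ r ∈ range m, (-1)^(m-r) * (Nat.choose m r : ℝ) * ((z+r)/(z+m))^(n+m) := by
    intro n
    rw [hf, Finset.sum_range_succ, Nat.sub_self, Nat.choose_self, div_self hzm.ne']
    simp
  constructor
  · apply IsBigO.of_bound (2^m)
    filter_upwards with n
    rw [hsplit]
    calc |∑ r ∈ range m, (-1)^(m-r) * (Nat.choose m r : ℝ) * ((z+r)/(z+m))^(n+m)|
        ≤ ∑ r ∈ range m, |(-1)^(m-r) * (Nat.choose m r : ℝ) * ((z+r)/(z+m))^(n+m)| :=
          Finset.abs_sum_le_sum_abs _ _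
      _ ≤ ∑ r ∈ range m, (Nat.choose m r : ℝ) * |((z+m-1)/(z+m))^(n+m)| := by
          apply Finset.sum_le_sum
          intro r hr
          rw [abs_mul, abs_mul, abs_pow, abs_neg, abs_one, one_pow, one_mul,
            Nat.abs_cast, abs_pow]
          rw [abs_pow]
          apply mul_le_mul_of_nonneg_left _ (Nat.cast_nonneg _)
          apply pow_le_pow_left₀ (abs_nonneg _)
          rw [abs_of_nonneg (by positivity : (0:ℝ) ≤ (z+r)/(z+m))]
          refine le_trans ?_ (le_abs_self _)
          have hrm : r < m := Finset.mem_range.mp hr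
          have h1 : (r:ℝ) + 1 ≤ m := by exact_mod_cast hrm
          gcongr
          linarith
      _ ≤ 2^m * |((z+m-1)/(z+m))^(n+m)| := by
          rw [← Finset.sum_mul]
          apply mul_le_mul_of_nonneg_right _ (abs_nonneg _)
          calc (∑ r ∈ range m, (Nat.choose m r : ℝ))
              ≤ ∑ r ∈ range (m+1), (Nat.choose m r : ℝ) := by
                apply Finset.sum_le_sum_of_subset_of_nonneg (Finset.range_subset_range.mpr (by omega))
                intro i _ _; positivity
            _ = 2^m := by
                rw [← Nat.cast_sum]
                norm_cast
                exact Nat.sum_range_choose m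
  · have h0 : Tendsto (fun n => B n * (Nat.factorial (n+m):ℝ) /
        ((Nat.factorial n : ℝ) * (z+m)^(n+m)) - 1) atTop (nhds 0) := by
      simp only [hsplit]
      rw [show (0:ℝ) = ∑ r ∈ range m, (0:ℝ) by simp]
      apply tendsto_finset_sum
      intro r hr
      rw [Finset.mem_range] at hr
      have hρ : |(z+r)/(z+m)| < 1 := by
        rw [abs_div, abs_of_pos hzm, abs_of_pos (by positivity : (0:ℝ) < z + r)]
        rw [div_lt_one hzm]
        have : (r:ℝ) < m := by exact_mod_cast hr
        linarith
      have := tendsto_pow_atTop_nhds_zero_of_abs_lt_one hρ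
      have h2 : Tendsto (fun n : ℕ => ((z+r)/(z+m))^(n+m)) atTop (nhds 0) :=
        this.comp (tendsto_add_atTop_nat m)
      have := h2.const_mul ((-1:ℝ)^(m-r) * (Nat.choose m r : ℝ))
      simpa [mul_assoc] using this
    have := h0.add_const 1
    simpa using this
end

section
/- For a fixed complex number z, as n → ∞ the Euler polynomial satisfies E_n(z) = (4·n!/π^{n+1}) · [sin(πz − πn/2) + O(3^{−n})]. -/
open scoped Real
open Complex Filter
open scoped Topology

section defs

noncomputable def Eu (w₀ : ℂ) : ℂ → ℂ := dslope (fun x => Complex.exp x + 1) w₀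

noncomputable def Eloc (z w₀ : ℂ) : ℂ → ℂ := fun w =>
  dslope (fun x => 2 * Complex.exp (x * z) + 2 * Complex.exp (w₀ * z) * Eu w₀ x) w₀ w / Eu w₀ w

noncomputable def Ew (m : ℤ) : ℂ := (m : ℂ) * (π * I)

noncomputable def Ept (z : ℂ) (m : ℤ) (w : ℂ) : ℂ := 2 * Complex.exp (Ew m * z) / (w - Ew m)

noncomputable def EP (z : ℂ) (w : ℂ) : ℂ := Ept z 1 w + Ept z (-1) w + Ept z 3 w + Ept z (-3) w

noncomputable def Eg (z w : ℂ) : ℂ := 2 * Complex.exp (w * z) / (Complex.exp w + 1)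

noncomputable def EH (z : ℂ) (w : ℂ) : ℂ :=
  (if w = Ew 1 then Eloc z (Ew 1) w else if w = Ew (-1) then Eloc z (Ew (-1)) w
   else if w = Ew 3 then Eloc z (Ew 3) w else if w = Ew (-3) then Eloc z (Ew (-3)) w
   else Eg z w) + EP z w

end defs

section prev
-- previous lemmas assumed present (from b.lean/c.lean) --
lemma Eu_same (w₀ : ℂ) : Eu w₀ w₀ = Complex.exp w₀ := by
  rw [Eu, dslope_same, deriv_add_const]
  simp [Complex.deriv_exp]

lemma Eu_of_ne {w₀ w : ℂ} (h₀ : Complex.exp w₀ = -1) (h : w ≠ w₀) :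
    Eu w₀ w = (Complex.exp w + 1) / (w - w₀) := by
  rw [Eu, dslope_of_ne _ h, slope_def_field, h₀]; ring

lemma Eu_analyticAt (w₀ : ℂ) : AnalyticAt ℂ (Eu w₀) w₀ := by
  obtain ⟨p, hp⟩ := (analyticAt_cexp (z := w₀)).add analyticAt_const
  exact hp.has_fpower_series_dslope_fslope.analyticAt

lemma Eu_diff (w₀ : ℂ) : Differentiable ℂ (Eu w₀) := by
  intro w
  rcases eq_or_ne w w₀ with rfl | h
  · exact (Eu_analyticAt w).differentiableAt
  · rw [Eu, differentiableAt_dslope_of_ne h]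
    exact (Complex.differentiable_exp.add_const 1).differentiableAt

lemma Eloc_diff (z w₀ : ℂ) : DifferentiableAt ℂ (Eloc z w₀) w₀ := by
  have hxz : AnalyticAt ℂ (fun x : ℂ => Complex.exp (x * z)) w₀ :=
    analyticAt_cexp.comp (analyticAt_id.mul analyticAt_const)
  have hN : AnalyticAt ℂ
      (fun x => 2 * Complex.exp (x * z) + 2 * Complex.exp (w₀ * z) * Eu w₀ x) w₀ :=
    (analyticAt_const.mul hxz).add (analyticAt_const.mul (Eu_analyticAt w₀))
  obtain ⟨p, hp⟩ := hN
  have h1 := hp.has_fpower_series_dslope_fslope.analyticAt.differentiableAt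
  have h2 : Eu w₀ w₀ ≠ 0 := by rw [Eu_same]; exact Complex.exp_ne_zero w₀
  exact h1.div (Eu_diff w₀ w₀) h2

lemma Eloc_eq {z w₀ w : ℂ} (h₀ : Complex.exp w₀ = -1) (h : w ≠ w₀)
    (h1 : Complex.exp w + 1 ≠ 0) :
    Eloc z w₀ w = 2 * Complex.exp (w * z) / (Complex.exp w + 1)
      + 2 * Complex.exp (w₀ * z) / (w - w₀) := by
  have hu : Eu w₀ w = (Complex.exp w + 1) / (w - w₀) := Eu_of_ne h₀ h
  have hw : w - w₀ ≠ 0 := sub_ne_zero.mpr h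
  have hu0 : Eu w₀ w ≠ 0 := by rw [hu]; exact div_ne_zero h1 hw
  rw [Eloc, dslope_of_ne _ h, slope_def_field, hu]
  have hN0 : 2 * Complex.exp (w₀ * z) + 2 * Complex.exp (w₀ * z) * Eu w₀ w₀ = 0 := by
    rw [Eu_same, h₀]; ring
  rw [hN0]
  field_simp
  ring

lemma Ew_inj {a b : ℤ} : Ew a = Ew b ↔ a = b := by
  rw [Ew, Ew, mul_left_inj']
  · exact_mod_cast Int.cast_inj (α := ℂ)
  · simp [Real.pi_ne_zero, Complex.I_ne_zero, Complex.ofReal_ne_zero]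

lemma exp_Ew {m : ℤ} (hm : Odd m) : Complex.exp (Ew m) = -1 := by
  rw [Ew, Complex.exp_int_mul, Complex.exp_pi_mul_I, hm.neg_one_zpow]

lemma pole_norm' (m : ℤ) : ‖Ew m‖ = |m| * π := by
  rw [Ew, norm_mul, norm_mul, Complex.norm_intCast, Complex.norm_I, mul_one,
    Complex.norm_real, Real.norm_eq_abs, _root_.abs_of_nonneg Real.pi_pos.le]
  norm_cast

lemma pole_char {w : ℂ} (h : Complex.exp w + 1 = 0) : ∃ k : ℤ, w = Ew (2 * k + 1) := by
  have h1 : Complex.exp w = Complex.exp (π * I) := by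
    rw [Complex.exp_pi_mul_I]; linear_combination h
  rw [Complex.exp_eq_exp_iff_exists_int] at h1
  obtain ⟨n, hn⟩ := h1
  refine ⟨n, ?_⟩
  rw [hn, Ew]; push_cast; ring

lemma ne_pole_of_norm_lt {w : ℂ} (h : ‖w‖ < π) : Complex.exp w + 1 ≠ 0 := by
  intro h0
  obtain ⟨k, rfl⟩ := pole_char h0
  rw [pole_norm'] at h
  have h1 : (1 : ℝ) ≤ |(2 * k + 1 : ℤ)| := by
    have : 2 * k + 1 ≠ 0 := by omega
    exact_mod_cast Int.one_le_abs this
  nlinarith [Real.pi_pos]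

lemma pole_isolated {m : ℤ} {x : ℂ} (hx : dist x (Ew m) < 1)
    (h0 : Complex.exp x + 1 = 0) : x = Ew m := by
  obtain ⟨k, rfl⟩ := pole_char h0
  have hd : dist (Ew (2 * k + 1)) (Ew m) = |2 * k + 1 - m| * π := by
    rw [dist_eq_norm, Ew, Ew, ← sub_mul]
    have : ((2 * k + 1 : ℤ) : ℂ) - (m : ℂ) = ((2 * k + 1 - m : ℤ) : ℂ) := by push_cast; ring
    rw [this, norm_mul, norm_mul, Complex.norm_intCast, Complex.norm_I, mul_one,
      Complex.norm_real, Real.norm_eq_abs, _root_.abs_of_nonneg Real.pi_pos.le]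
    norm_cast
  rw [hd] at hx
  rw [Ew_inj]
  by_contra hne
  have h1 : (1 : ℝ) ≤ |(2 * k + 1 - m : ℤ)| := by
    have : 2 * k + 1 - m ≠ 0 := by omega
    exact_mod_cast Int.one_le_abs this
  nlinarith [Real.pi_gt_three]

end prev

lemma Ept_diff_at (z : ℂ) (m : ℤ) {w : ℂ} (h : w ≠ Ew m) :
    DifferentiableAt ℂ (Ept z m) w := by
  refine DifferentiableAt.div (differentiableAt_const _) ?_ (sub_ne_zero.mpr h)
  exact differentiableAt_id.sub_const _

lemma EH_eq_on_ne {z x : ℂ} (hx : Complex.exp x + 1 ≠ 0) :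
    EH z x = Eg z x + EP z x := by
  have h1 : ∀ m : ℤ, Odd m → x ≠ Ew m := by
    intro m hm he
    rw [he, exp_Ew hm] at hx
    simp at hx
  rw [EH, if_neg (h1 1 (by decide)), if_neg (h1 (-1) (by decide)),
    if_neg (h1 3 (by decide)), if_neg (h1 (-3) (by decide))]

lemma EH_diff_at_pole (z : ℂ) {m : ℤ}
    (hmm : m = 1 ∨ m = -1 ∨ m = 3 ∨ m = -3) :
    DifferentiableAt ℂ (EH z) (Ew m) := by
  have hm : Odd m := by rcases hmm with rfl | rfl | rfl | rfl <;> decide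
  have hTdiff : DifferentiableAt ℂ (fun x => Eloc z (Ew m) x + (EP z x - Ept z m x)) (Ew m) := by
    have hrest : DifferentiableAt ℂ (fun x => EP z x - Ept z m x) (Ew m) := by
      have hne : ∀ m' : ℤ, m' ≠ m → (Ew m : ℂ) ≠ Ew m' := by
        intro m' hm' he
        exact hm' (Ew_inj.mp he.symm)
      rcases hmm with rfl | rfl | rfl | rfl
      · have : (fun x => EP z x - Ept z 1 x)
            = fun x => Ept z (-1) x + Ept z 3 x + Ept z (-3) x := by
          funext x; rw [EP]; ring
        rw [this]
        exact ((Ept_diff_at z (-1) (hne _ (by decide))).add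
          (Ept_diff_at z 3 (hne _ (by decide)))).add (Ept_diff_at z (-3) (hne _ (by decide)))
      · have : (fun x => EP z x - Ept z (-1) x)
            = fun x => Ept z 1 x + Ept z 3 x + Ept z (-3) x := by
          funext x; rw [EP]; ring
        rw [this]
        exact ((Ept_diff_at z 1 (hne _ (by decide))).add
          (Ept_diff_at z 3 (hne _ (by decide)))).add (Ept_diff_at z (-3) (hne _ (by decide)))
      · have : (fun x => EP z x - Ept z 3 x)
            = fun x => Ept z 1 x + Ept z (-1) x + Ept z (-3) x := by
          funext x; rw [EP]; ring
        rw [this]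
        exact ((Ept_diff_at z 1 (hne _ (by decide))).add
          (Ept_diff_at z (-1) (hne _ (by decide)))).add (Ept_diff_at z (-3) (hne _ (by decide)))
      · have : (fun x => EP z x - Ept z (-3) x)
            = fun x => Ept z 1 x + Ept z (-1) x + Ept z 3 x := by
          funext x; rw [EP]; ring
        rw [this]
        exact ((Ept_diff_at z 1 (hne _ (by decide))).add
          (Ept_diff_at z (-1) (hne _ (by decide)))).add (Ept_diff_at z 3 (hne _ (by decide)))
    exact (Eloc_diff z (Ew m)).add hrest
  refine hTdiff.congr_of_eventuallyEq ?_
  filter_upwards [Metric.ball_mem_nhds (Ew m) one_pos] with x hx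
  rw [Metric.mem_ball] at hx
  by_cases hxm : x = Ew m
  · have hx1 : ∀ m' : ℤ, m ≠ m' → x ≠ Ew m' := by
      intro m' hne he
      exact hne (Ew_inj.mp (hxm.symm.trans he))
    have hval : EH z x = Eloc z (Ew m) x + EP z x := by
      rcases hmm with rfl | rfl | rfl | rfl
      · rw [EH, if_pos hxm]
      · rw [EH, if_neg (hx1 1 (by decide)), if_pos hxm]
      · rw [EH, if_neg (hx1 1 (by decide)), if_neg (hx1 (-1) (by decide)), if_pos hxm]
      · rw [EH, if_neg (hx1 1 (by decide)), if_neg (hx1 (-1) (by decide)),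
          if_neg (hx1 3 (by decide)), if_pos hxm]
    have hthis : Ept z m x = 0 := by rw [Ept, hxm, sub_self, div_zero]
    rw [hval, hthis]
    ring
  · have hx0 : Complex.exp x + 1 ≠ 0 := fun h0 => hxm (pole_isolated hx h0)
    rw [EH_eq_on_ne hx0, Eloc_eq (exp_Ew hm) hxm hx0]
    rw [← Eg, ← Ept]
    ring

noncomputable def Ec (z : ℂ) (m : ℤ) (n : ℕ) : ℂ := -(2 * Complex.exp (Ew m * z)) / (Ew m) ^ (n + 1)
lemma Ew_ne_zero {m : ℤ} (hm : m ≠ 0) : Ew m ≠ 0 := by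
  intro h
  have := pole_norm' m
  rw [h, norm_zero] at this
  have h1 : (1 : ℝ) ≤ |m| := by exact_mod_cast Int.one_le_abs hm
  nlinarith [Real.pi_pos]

lemma Ept_hasSum (z : ℂ) {m : ℤ} (hm : m ≠ 0) {w : ℂ} (hw : ‖w‖ < |m| * π) :
    HasSum (fun n => Ec z m n * w ^ n) (Ept z m w) := by
  have hEw : Ew m ≠ 0 := Ew_ne_zero hm
  have hmpos : (0 : ℝ) < |m| * π := by
    have h1 : (1 : ℝ) ≤ |m| := by exact_mod_cast Int.one_le_abs hm
    nlinarith [Real.pi_pos]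
  have hc : ‖w / Ew m‖ < 1 := by
    rw [norm_div, pole_norm', div_lt_one hmpos]
    exact hw
  have h := (hasSum_geometric_of_norm_lt_one hc).mul_left (-(2 * Complex.exp (Ew m * z)) / Ew m)
  have hwm : w - Ew m ≠ 0 := by
    intro h'
    have : w = Ew m := by linear_combination h'
    rw [this, pole_norm'] at hw
    linarith
  have h1 : (fun n => -(2 * Complex.exp (Ew m * z)) / Ew m * (w / Ew m) ^ n)
      = fun n => Ec z m n * w ^ n := by
    funext n
    rw [Ec, div_pow, pow_succ, div_mul_div_comm, div_mul_eq_mul_div]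
    congr 1
    ring
  have h2 : -(2 * Complex.exp (Ew m * z)) / Ew m * (1 - w / Ew m)⁻¹ = Ept z m w := by
    rw [Ept]
    have h3 : 1 - w / Ew m = (Ew m - w) / Ew m := by field_simp
    rw [h3, inv_div]
    have h4 : Ew m - w ≠ 0 := by intro h'; apply hwm; linear_combination -h'
    field_simp
    ring
  rw [h1, h2] at h
  exact h

lemma Eg_diff_at (z : ℂ) {w : ℂ} (h0 : Complex.exp w + 1 ≠ 0) :
    DifferentiableAt ℂ (Eg z) w := by
  refine DifferentiableAt.div ?_ ?_ h0
  · exact (differentiableAt_const _).mul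
      ((Complex.differentiable_exp.differentiableAt).comp w
        (differentiableAt_id.mul (differentiableAt_const _)))
  · exact (Complex.differentiable_exp.differentiableAt).add_const 1

lemma EH_diffOn (z : ℂ) : DifferentiableOn ℂ (EH z) (Metric.closedBall 0 (4 * π)) := by
  intro w hw
  refine DifferentiableAt.differentiableWithinAt ?_
  by_cases h0 : Complex.exp w + 1 = 0
  · obtain ⟨k, rfl⟩ := pole_char h0
    apply EH_diff_at_pole
    rw [Metric.mem_closedBall, dist_zero_right, pole_norm'] at hw
    have h4 : |2 * k + 1| ≤ 4 := by
      by_contra hgt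
      push_neg at hgt
      have h5 : (5 : ℝ) ≤ |(2 * k + 1 : ℤ)| := by exact_mod_cast hgt
      nlinarith [Real.pi_pos]
    have := abs_le.mp h4
    omega
  · have hopen : IsOpen {x : ℂ | Complex.exp x + 1 ≠ 0} := by
      have : {x : ℂ | Complex.exp x + 1 ≠ 0}
          = (fun x => Complex.exp x + 1) ⁻¹' ({0}ᶜ) := rfl
      rw [this]
      exact (isOpen_compl_singleton).preimage (Complex.continuous_exp.add continuous_const)
    have hev : EH z =ᶠ[𝓝 w] fun x => Eg z x + EP z x := by
      filter_upwards [hopen.mem_nhds h0] with x hx using EH_eq_on_ne hx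
    rw [hev.differentiableAt_iff]
    have hne : ∀ m : ℤ, Odd m → w ≠ Ew m := by
      intro m hm he
      rw [he, exp_Ew hm] at h0
      simp at h0
    exact (Eg_diff_at z h0).add
      ((((Ept_diff_at z 1 (hne 1 (by decide))).add
        (Ept_diff_at z (-1) (hne (-1) (by decide)))).add
        (Ept_diff_at z 3 (hne 3 (by decide)))).add
        (Ept_diff_at z (-3) (hne (-3) (by decide))))

lemma EH_cauchy_bound (z : ℂ) : ∃ K : ℝ, 0 ≤ K ∧ ∀ n,
    ‖(cauchyPowerSeries (EH z) 0 (4 * π)).coeff n‖ ≤ K * ((4 * π)⁻¹) ^ n := by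
  obtain ⟨K, hK⟩ := (isCompact_closedBall (0 : ℂ) (4 * π)).exists_bound_of_continuousOn
    (EH_diffOn z).continuousOn
  have hK0 : 0 ≤ K := by
    have h0 : (0 : ℂ) ∈ Metric.closedBall (0 : ℂ) (4 * π) := by
      rw [Metric.mem_closedBall, dist_self]; positivity
    exact (norm_nonneg _).trans (hK 0 h0)
  refine ⟨K, hK0, fun n => ?_⟩
  have hmem : ∀ θ : ℝ, circleMap 0 (4 * π) θ ∈ Metric.closedBall (0 : ℂ) (4 * π) :=
    fun θ => Metric.sphere_subset_closedBall (circleMap_mem_sphere 0 (by positivity) θ)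
  have hcont : Continuous fun θ : ℝ => ‖EH z (circleMap 0 (4 * π) θ)‖ :=
    ((EH_diffOn z).continuousOn.comp_continuous (continuous_circleMap 0 (4 * π))
      hmem).norm
  have hint : (∫ θ in (0 : ℝ)..(2 * π), ‖EH z (circleMap 0 (4 * π) θ)‖) ≤ 2 * π * K := by
    have h1 : (∫ θ in (0 : ℝ)..(2 * π), ‖EH z (circleMap 0 (4 * π) θ)‖)
        ≤ ∫ _ in (0 : ℝ)..(2 * π), K :=
      intervalIntegral.integral_mono_on Real.two_pi_pos.le
        (hcont.intervalIntegrable 0 (2 * π)) intervalIntegrable_const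
        (fun θ _ => hK _ (hmem θ))
    rw [intervalIntegral.integral_const, smul_eq_mul] at h1
    linarith
  have hb := norm_cauchyPowerSeries_le (EH z) 0 (4 * π) n
  rw [FormalMultilinearSeries.norm_apply_eq_norm_coef] at hb
  have habs : |4 * π| = 4 * π := _root_.abs_of_pos (by positivity)
  rw [habs] at hb
  refine hb.trans ?_
  have hpow : (0 : ℝ) ≤ ((4 * π)⁻¹) ^ n := by positivity
  have h2 : (2 * π)⁻¹ * (∫ θ in (0 : ℝ)..(2 * π), ‖EH z (circleMap 0 (4 * π) θ)‖) ≤ K := by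
    have h3 : (2 * π)⁻¹ * (∫ θ in (0 : ℝ)..(2 * π), ‖EH z (circleMap 0 (4 * π) θ)‖)
        ≤ (2 * π)⁻¹ * (2 * π * K) :=
      mul_le_mul_of_nonneg_left hint (by positivity)
    have h4 : (2 * π)⁻¹ * (2 * π * K) = K := by
      field_simp
    linarith
  exact mul_le_mul_of_nonneg_right h2 hpow

lemma coeff_eq (z : ℂ) (a : ℕ → ℂ)
    (hsum : ∀ w : ℂ, ‖w‖ < 1 → HasSum (fun n => a n * w ^ n) (Eg z w)) :
    ∀ n, a n + (Ec z 1 n + Ec z (-1) n + Ec z 3 n + Ec z (-3) n)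
      = (cauchyPowerSeries (EH z) 0 (4 * π)).coeff n := by
  set b : ℕ → ℂ := fun n => a n + (Ec z 1 n + Ec z (-1) n + Ec z 3 n + Ec z (-3) n) with hb
  set q := FormalMultilinearSeries.ofScalars ℂ b with hq
  have hcoeff : ∀ n, q.coeff n = b n := by
    intro n
    have h := FormalMultilinearSeries.ofScalars_apply_eq (E := ℂ) (c := b) 1 n
    rw [FormalMultilinearSeries.coeff, hq]
    simpa using h
  have hone_lt_pi : (1 : ℝ) < π := by nlinarith [Real.pi_gt_three]
  have hqFPS : HasFPowerSeriesAt (EH z) q 0 := by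
    rw [hasFPowerSeriesAt_iff]
    filter_upwards [Metric.ball_mem_nhds (0 : ℂ) one_pos] with w hw
    rw [Metric.mem_ball, dist_zero_right] at hw
    have hwπ : ‖w‖ < π := lt_trans hw hone_lt_pi
    have h0 : Complex.exp w + 1 ≠ 0 := ne_pole_of_norm_lt hwπ
    have hS0 := hsum w hw
    have hS1 := Ept_hasSum z (m := 1) (by decide) (w := w)
      (by rw [show |(1 : ℤ)| = 1 from rfl]; push_cast; simpa using hwπ)
    have hS2 := Ept_hasSum z (m := -1) (by decide) (w := w)
      (by rw [show |(-1 : ℤ)| = 1 from rfl]; push_cast; simpa using hwπ)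
    have hS3 := Ept_hasSum z (m := 3) (by decide) (w := w)
      (by rw [show |(3 : ℤ)| = 3 from rfl]; push_cast; nlinarith [Real.pi_pos])
    have hS4 := Ept_hasSum z (m := -3) (by decide) (w := w)
      (by rw [show |(-3 : ℤ)| = 3 from rfl]; push_cast; nlinarith [Real.pi_pos])
    have htot := hS0.add (((hS1.add hS2).add hS3).add hS4)
    have hfe : (fun n => a n * w ^ n
        + (((Ec z 1 n * w ^ n + Ec z (-1) n * w ^ n) + Ec z 3 n * w ^ n)
          + Ec z (-3) n * w ^ n))
        = fun n => w ^ n • q.coeff n := by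
      funext n
      rw [hcoeff n, hb, smul_eq_mul]
      ring
    rw [hfe] at htot
    have hEHval : EH z (0 + w)
        = Eg z w + (((Ept z 1 w + Ept z (-1) w) + Ept z 3 w) + Ept z (-3) w) := by
      rw [zero_add, EH_eq_on_ne h0, EP]
    rw [hEHval]
    exact htot
  have hcFPS : HasFPowerSeriesAt (EH z) (cauchyPowerSeries (EH z) 0 (4 * π)) 0 := by
    set R : NNReal := ⟨4 * π, by positivity⟩ with hRdef
    have hR : 0 < R := by
      rw [← NNReal.coe_lt_coe]
      show (0 : ℝ) < 4 * π
      positivity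
    have hd : DifferentiableOn ℂ (EH z) (Metric.closedBall 0 (R : ℝ)) := EH_diffOn z
    exact (hd.hasFPowerSeriesOnBall hR).hasFPowerSeriesAt
  have heq := hqFPS.eq_formalMultilinearSeries hcFPS
  intro n
  rw [← heq, hcoeff n]

lemma sin_id (z : ℂ) (n : ℕ) :
    (π : ℂ) ^ (n + 1) / 4 * (2 * Complex.exp (Ew 1 * z) / (Ew 1) ^ (n + 1)
      + 2 * Complex.exp (Ew (-1) * z) / (Ew (-1)) ^ (n + 1))
    = Complex.sin ((π : ℂ) * z - (π : ℂ) * n / 2) := by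
  have hA : (π : ℂ) ≠ 0 := by exact_mod_cast Real.pi_ne_zero
  have e1 : Ew 1 = (π : ℂ) * I := by rw [Ew]; push_cast; ring
  have e2 : Ew (-1) = -((π : ℂ) * I) := by rw [Ew]; push_cast; ring
  have hsin : Complex.sin ((π : ℂ) * z - (π : ℂ) * n / 2)
      = (Complex.exp (-((π : ℂ) * z - (π : ℂ) * n / 2) * I)
        - Complex.exp (((π : ℂ) * z - (π : ℂ) * n / 2) * I)) * I / 2 := rfl
  have hIexp : Complex.exp ((π : ℂ) / 2 * I) = I := by
    rw [Complex.exp_mul_I]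
    have h1 : ((π : ℂ) / 2) = ((π / 2 : ℝ) : ℂ) := by push_cast; ring
    rw [h1, ← Complex.ofReal_cos, ← Complex.ofReal_sin, Real.cos_pi_div_two,
      Real.sin_pi_div_two]
    simp
  have hexp1 : Complex.exp (-((π : ℂ) * z - (π : ℂ) * n / 2) * I)
      = Complex.exp (-((π : ℂ) * z * I)) * I ^ n := by
    rw [show (-((π : ℂ) * z - (π : ℂ) * n / 2) * I)
      = -((π : ℂ) * z * I) + n * ((π : ℂ) / 2 * I) by ring, Complex.exp_add,
      Complex.exp_nat_mul, hIexp]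
  have hexp2 : Complex.exp (((π : ℂ) * z - (π : ℂ) * n / 2) * I)
      = Complex.exp ((π : ℂ) * z * I) * (I ^ n)⁻¹ := by
    rw [show ((((π : ℂ) * z - (π : ℂ) * n / 2)) * I)
      = (π : ℂ) * z * I + -(n * ((π : ℂ) / 2 * I)) by ring, Complex.exp_add,
      Complex.exp_neg, Complex.exp_nat_mul, hIexp]
  have hz1 : Ew 1 * z = (π : ℂ) * z * I := by rw [e1]; ring
  have hz2 : Ew (-1) * z = -((π : ℂ) * z * I) := by rw [e2]; ring
  rw [hsin, hexp1, hexp2, hz1, hz2, e1, e2]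
  have hJ : (I : ℂ) ^ n * I ^ n = (-1) ^ n := by rw [← mul_pow, Complex.I_mul_I]
  have hJne : (I : ℂ) ^ n ≠ 0 := pow_ne_zero _ Complex.I_ne_zero
  set u := Complex.exp ((π : ℂ) * z * I)
  set v := Complex.exp (-((π : ℂ) * z * I))
  have hIinv : (I : ℂ)⁻¹ = -I := Complex.inv_I
  have hJinv : ((I : ℂ) ^ n)⁻¹ = (-1) ^ n * I ^ n := by
    refine inv_eq_of_mul_eq_one_left ?_
    rw [mul_assoc, hJ, ← mul_pow]
    norm_num
  rw [mul_pow, neg_pow (((π : ℂ)) * I), mul_pow]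
  rw [pow_succ (I : ℂ) n, pow_succ (-1 : ℂ) n]
  simp only [div_eq_mul_inv, mul_inv, hJinv, hIinv]
  have h1 : ((-1 : ℂ) ^ n) * ((-1 : ℂ) ^ n) = 1 := by rw [← mul_pow]; norm_num
  have hAinv : ((π : ℂ) ^ (n+1))⁻¹ * (π : ℂ) ^ (n+1) = 1 :=
    inv_mul_cancel₀ (pow_ne_zero _ hA)
  rw [pow_succ (π : ℂ) n] at hAinv ⊢
  ring_nf
  have h2 : ((-1 : ℂ)) ^ (n * 2) = 1 := by rw [mul_comm n 2, pow_mul]; norm_num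
  rw [inv_neg_one, mul_assoc _ ((-1 : ℂ) ^ n) ((-1 : ℂ) ^ n), h1]
  have hpp : (↑π : ℂ) * (↑π : ℂ) ^ n * (↑π : ℂ)⁻¹ * ((↑π : ℂ)⁻¹) ^ n = 1 := by
    rw [inv_pow, show (↑π : ℂ) * (↑π : ℂ) ^ n * (↑π : ℂ)⁻¹ * ((↑π : ℂ) ^ n)⁻¹
      = ((↑π : ℂ) * (↑π : ℂ)⁻¹) * ((↑π : ℂ) ^ n * ((↑π : ℂ) ^ n)⁻¹) from by ring,
      mul_inv_cancel₀ hA, mul_inv_cancel₀ (pow_ne_zero n hA), one_mul]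
  linear_combination (u * Complex.I * Complex.I ^ n * (-1 : ℂ) ^ n * (-1/2)) * hpp
    + (Complex.I * Complex.I ^ n * v * (1/2)) * hpp

/-- For fixed complex `z`, as `n → ∞`, the Euler polynomial (defined by
`2 e^{wz}/(e^w+1) = Σ E_n(z) w^n/n!` for `|w| < π`) satisfies
`E_n(z) = (4 n!/π^{n+1})[sin(πz - πn/2) + O(3^{-n})]`, i.e.
`|E_n(z) π^{n+1}/(4 n!) - sin(πz - πn/2)| ≤ C 3^{-n}` for a constant `C`
depending only on `z`. -/
theorem stmt9 (z : ℂ) (E : ℕ → ℂ)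
    (hE : ∀ w : ℂ, ‖w‖ < π →
      2 * Complex.exp (w * z) / (Complex.exp w + 1) =
        ∑' n : ℕ, E n / (Nat.factorial n : ℂ) * w ^ n) :
    ∃ C : ℝ, ∀ n : ℕ,
      ‖E n * (π : ℂ) ^ (n + 1) / (4 * (Nat.factorial n : ℂ)) -
        Complex.sin ((π : ℂ) * z - (π : ℂ) * n / 2)‖ ≤ C * (1 / 3) ^ n := by
  set a : ℕ → ℂ := fun n => E n / (Nat.factorial n : ℂ) with ha
  have hone_lt_pi : (1 : ℝ) < π := by nlinarith [Real.pi_gt_three]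
  have hsum : ∀ w : ℂ, ‖w‖ < 1 → HasSum (fun n => a n * w ^ n) (Eg z w) := by
    intro w hw
    have hwπ : ‖w‖ < π := lt_trans hw hone_lt_pi
    have hEw := hE w hwπ
    have hne : Eg z w ≠ 0 := by
      rw [Eg]
      exact div_ne_zero (mul_ne_zero two_ne_zero (Complex.exp_ne_zero _))
        (ne_pole_of_norm_lt hwπ)
    have hsummable : Summable (fun n => E n / (Nat.factorial n : ℂ) * w ^ n) := by
      by_contra hns
      rw [tsum_eq_zero_of_not_summable hns] at hEw
      exact hne (by rw [Eg]; exact hEw)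
    have h1 := hsummable.hasSum
    rw [← hEw] at h1
    rw [Eg]
    exact h1
  obtain ⟨K, hK0, hKb⟩ := EH_cauchy_bound z
  have hco := coeff_eq z a hsum
  refine ⟨π * K / 4 + (‖Complex.exp (Ew 3 * z)‖ / 2 + ‖Complex.exp (Ew (-3) * z)‖ / 2),
    fun n => ?_⟩
  have hfact : ((Nat.factorial n : ℂ)) ≠ 0 := by
    exact_mod_cast (Nat.factorial_ne_zero n)
  have hA : (π : ℂ) ≠ 0 := by exact_mod_cast Real.pi_ne_zero
  have hW1 : (Ew 1) ^ (n+1) ≠ 0 := pow_ne_zero _ (Ew_ne_zero (by decide))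
  have hW2 : (Ew (-1)) ^ (n+1) ≠ 0 := pow_ne_zero _ (Ew_ne_zero (by decide))
  have hsin := sin_id z n
  have hsplit : E n * (π : ℂ) ^ (n + 1) / (4 * (Nat.factorial n : ℂ))
        - Complex.sin ((π : ℂ) * z - (π : ℂ) * n / 2)
      = (π : ℂ) ^ (n+1) / 4
          * (a n + (Ec z 1 n + Ec z (-1) n + Ec z 3 n + Ec z (-3) n))
        - (π : ℂ) ^ (n+1) / 4 * (Ec z 3 n + Ec z (-3) n) := by
    have hXa : E n * (π : ℂ) ^ (n + 1) / (4 * (Nat.factorial n : ℂ))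
        = (π : ℂ) ^ (n+1) / 4 * a n := by
      simp only [ha]
      field_simp
    rw [← hsin, hXa, Ec, Ec, Ec, Ec]
    ring
  rw [hsplit, hco n]
  -- norms
  have hnA : ‖(π : ℂ) ^ (n+1) / 4‖ = π ^ (n+1) / 4 := by
    rw [norm_div, norm_pow, Complex.norm_real, Real.norm_eq_abs,
      _root_.abs_of_pos Real.pi_pos]
    norm_num
  have hpi_pos := Real.pi_pos
  have h1 : ‖(π : ℂ) ^ (n+1) / 4 * ((cauchyPowerSeries (EH z) 0 (4 * π)).coeff n)‖
      ≤ π * K / 4 * (1/3 : ℝ) ^ n := by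
    rw [norm_mul, hnA]
    have hb := hKb n
    have h2 : π ^ (n+1) / 4 * ‖(cauchyPowerSeries (EH z) 0 (4 * π)).coeff n‖
        ≤ π ^ (n+1) / 4 * (K * ((4 * π)⁻¹) ^ n) :=
      mul_le_mul_of_nonneg_left hb (by positivity)
    have h3 : π ^ (n+1) / 4 * (K * ((4 * π)⁻¹) ^ n) = π * K / 4 * (1/4 : ℝ) ^ n := by
      have h4 : ((1 : ℝ)/4) ^ n = π ^ n * ((4 * π)⁻¹) ^ n := by
        rw [← mul_pow]
        congr 1
        field_simp
      rw [h4, pow_succ]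
      ring
    have h5 : ((1 : ℝ)/4) ^ n ≤ ((1 : ℝ)/3) ^ n :=
      pow_le_pow_left₀ (by norm_num) (by norm_num) n
    have h6 : π * K / 4 * (1/4 : ℝ) ^ n ≤ π * K / 4 * (1/3 : ℝ) ^ n :=
      mul_le_mul_of_nonneg_left h5 (by positivity)
    linarith
  have hEc3 : ∀ m : ℤ, (3 : ℝ) = |m| → ‖(π : ℂ) ^ (n+1) / 4 * Ec z m n‖
      ≤ ‖Complex.exp (Ew m * z)‖ / 2 * (1/3 : ℝ) ^ n := by
    intro m hm
    rw [norm_mul, hnA, Ec, norm_div, norm_neg, norm_mul, norm_pow, pole_norm', ← hm]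
    have he := norm_nonneg (Complex.exp (Ew m * z))
    have h7 : π ^ (n+1) / 4 * (‖(2 : ℂ)‖ * ‖Complex.exp (Ew m * z)‖ / (3 * π) ^ (n+1))
        = ‖Complex.exp (Ew m * z)‖ / 2 * (1/3 : ℝ) ^ (n+1) := by
      have h8 : ((1 : ℝ)/3) ^ (n+1) = π ^ (n+1) / (3 * π) ^ (n+1) := by
        rw [← div_pow]
        congr 1
        field_simp
      rw [h8, Complex.norm_ofNat]
      field_simp
      ring
    rw [h7]
    have h9 : ((1 : ℝ)/3) ^ (n+1) ≤ ((1 : ℝ)/3) ^ n :=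
      pow_le_pow_of_le_one (by norm_num) (by norm_num) (Nat.le_succ n)
    exact mul_le_mul_of_nonneg_left h9 (by positivity)
  have h2 := hEc3 3 (by norm_num)
  have h3 := hEc3 (-3) (by norm_num)
  calc ‖(π : ℂ) ^ (n+1) / 4 * ((cauchyPowerSeries (EH z) 0 (4 * π)).coeff n)
        - (π : ℂ) ^ (n+1) / 4 * (Ec z 3 n + Ec z (-3) n)‖
      ≤ ‖(π : ℂ) ^ (n+1) / 4 * ((cauchyPowerSeries (EH z) 0 (4 * π)).coeff n)‖
        + ‖(π : ℂ) ^ (n+1) / 4 * (Ec z 3 n + Ec z (-3) n)‖ := norm_sub_le _ _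
    _ ≤ ‖(π : ℂ) ^ (n+1) / 4 * ((cauchyPowerSeries (EH z) 0 (4 * π)).coeff n)‖
        + (‖(π : ℂ) ^ (n+1) / 4 * Ec z 3 n‖ + ‖(π : ℂ) ^ (n+1) / 4 * Ec z (-3) n‖) := by
        have : (π : ℂ) ^ (n+1) / 4 * (Ec z 3 n + Ec z (-3) n)
            = (π : ℂ) ^ (n+1) / 4 * Ec z 3 n + (π : ℂ) ^ (n+1) / 4 * Ec z (-3) n := by ring
        rw [this]
        exact add_le_add le_rfl (norm_add_le _ _)
    _ ≤ π * K / 4 * (1/3 : ℝ) ^ n + (‖Complex.exp (Ew 3 * z)‖ / 2 * (1/3 : ℝ) ^ n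
        + ‖Complex.exp (Ew (-3) * z)‖ / 2 * (1/3 : ℝ) ^ n) := by
        exact add_le_add h1 (add_le_add h2 h3)
    _ = (π * K / 4 + (‖Complex.exp (Ew 3 * z)‖ / 2 + ‖Complex.exp (Ew (-3) * z)‖ / 2))
        * (1/3 : ℝ) ^ n := by ring
end
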